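/- Fix d ≥ 1. The family of maps (x ↦ Ψ₂₃(x,y))_{y∈𝒰_fin} is weakly distribution determining: if μ and μ' are Borel probability measures on 𝒰 = U^{ℤ^d} such that for every y ∈ 𝒰_fin the pushforward of μ under x ↦ Ψ₂₃(x,y) equals the pushforward of μ' under x ↦ Ψ₂₃(x,y) (as probability measures on U), then μ = μ'. -/

import Mathlib

open Function MeasureTheory Classical

/-- The duality function `Ψ₂₃ : 𝒰 × 𝒰_fin → U` on `U = {0,1} × {0,1}` (encoded as
`Bool × Bool`), given explicitly by
`Ψ₂₃(x,y) = (max_i min(x₁ i, y₁ i), Σ_i min(x₂ i, y₂ i) mod 2)`,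
i.e. the `⊻`-product `⊻_i ψ₂₃(x i, y i)` with `ψ₂₃((a₁,a₂),(b₁,b₂)) = (min a₁ b₁, min a₂ b₂)`
(a well-defined finite product whenever `y` is finitely supported; the second coordinate is
set to `false` in the degenerate case of an infinite index set of ones). -/
noncomputable def Psi23 {Λ : Type*} (x y : Λ → Bool × Bool) : Bool × Bool :=
  (if ∃ i, (x i).1 = true ∧ (y i).1 = true then true else false,
   if h : {i : Λ | (x i).2 = true ∧ (y i).2 = true}.Finite then
     (h.toFinset.card % 2 == 1) else false)

namespace Psi23Aux

variable {Λ : Type*}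

noncomputable def g : Bool × Bool → ℝ := fun u => (if u.1 then 0 else 1) * (if u.2 then -1 else 1)

noncomputable def phi : Bool × Bool → Bool × Bool → ℝ := fun w u =>
  (if w.1 then (if u.1 then 0 else 1) else 1) * (if w.2 then (if u.2 then -1 else 1) else 1)

lemma g_psi (J : Finset Λ) (y : Λ → Bool × Bool) (hy : ∀ i ∉ J, y i = (false, false))
    (x : Λ → Bool × Bool) :
    g (Psi23 x y) = ∏ i ∈ J, phi (y i) (x i) := by
  classical
  have hy1 : ∀ i, (y i).1 = true → i ∈ J := by
    intro i hi; by_contra hc; rw [hy i hc] at hi; simp at hi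
  have hy2 : ∀ i, (y i).2 = true → i ∈ J := by
    intro i hi; by_contra hc; rw [hy i hc] at hi; simp at hi
  set Q : Λ → Prop := fun i => (x i).2 = true ∧ (y i).2 = true with hQ
  have hQfin : {i : Λ | Q i}.Finite :=
    Set.Finite.subset J.finite_toSet (fun i hi => hy2 i hi.2)
  have htf : hQfin.toFinset = J.filter Q := by
    ext i
    simp only [Set.Finite.mem_toFinset, Set.mem_setOf_eq, Finset.mem_filter]
    exact ⟨fun hq => ⟨hy2 i hq.2, hq⟩, fun hq => hq.2⟩
  -- compute Psi23
  have hpsi : Psi23 x y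
      = (if ∃ i, (x i).1 = true ∧ (y i).1 = true then true else false,
         ((J.filter Q).card % 2 == 1)) := by
    simp only [Psi23, hQ, dif_pos hQfin]
    rw [dif_pos hQfin, htf]
  have hphisplit : ∀ w u : Bool × Bool, phi w u
      = (if u.1 = true ∧ w.1 = true then (0:ℝ) else 1)
        * (if u.2 = true ∧ w.2 = true then (-1:ℝ) else 1) := by
    rintro ⟨a, b⟩ ⟨c, e⟩
    rcases a <;> rcases b <;> rcases c <;> rcases e <;> norm_num [phi]
  have hsplit : ∀ i ∈ J, phi (y i) (x i)
      = (if (x i).1 = true ∧ (y i).1 = true then (0:ℝ) else 1)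
        * (if Q i then (-1:ℝ) else 1) := fun i _ => hphisplit (y i) (x i)
  have h1 : (if (∃ i, (x i).1 = true ∧ (y i).1 = true) then (0:ℝ) else 1)
      = ∏ i ∈ J, (if (x i).1 = true ∧ (y i).1 = true then (0:ℝ) else 1) := by
    by_cases hP : ∃ i, (x i).1 = true ∧ (y i).1 = true
    · obtain ⟨i, hi⟩ := hP
      rw [if_pos ⟨i, hi⟩]
      exact (Finset.prod_eq_zero (hy1 i hi.2) (by rw [if_pos hi])).symm
    · rw [if_neg hP]
      refine (Finset.prod_eq_one fun i _ => ?_).symm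
      rw [if_neg fun hi => hP ⟨i, hi⟩]
  have h2 : (if ((J.filter Q).card % 2 == 1 : Bool) = true then (-1:ℝ) else 1)
      = ∏ i ∈ J, (if Q i then (-1:ℝ) else 1) := by
    rw [Finset.prod_ite (fun _ => (-1:ℝ)) (fun _ => (1:ℝ)), Finset.prod_const,
      Finset.prod_const, one_pow, mul_one]
    rcases Nat.even_or_odd (J.filter Q).card with he | ho
    · rw [he.neg_one_pow]
      have hm : (J.filter Q).card % 2 = 0 := Nat.even_iff.mp he
      simp [hm]
    · rw [ho.neg_one_pow]
      have hm : (J.filter Q).card % 2 = 1 := Nat.odd_iff.mp ho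
      simp [hm]
  have hg : g (if ∃ i, (x i).1 = true ∧ (y i).1 = true then true else false,
        ((J.filter Q).card % 2 == 1))
      = (if (∃ i, (x i).1 = true ∧ (y i).1 = true) then (0:ℝ) else 1)
        * (if ((J.filter Q).card % 2 == 1 : Bool) = true then (-1:ℝ) else 1) := by
    by_cases hP : ∃ i, (x i).1 = true ∧ (y i).1 = true <;> simp [g, hP]
  rw [hpsi, hg, h1, h2, Finset.prod_congr rfl hsplit, Finset.prod_mul_distrib]


noncomputable def co : Bool × Bool → Bool × Bool → ℝ := fun u w =>
  (if u.1 then (if w.1 then -1 else 1) else (if w.1 then 1 else 0)) *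
  (if u.2 then (if w.2 then -(1:ℝ)/2 else 1/2) else (1/2))

lemma norm_g_le (u : Bool × Bool) : ‖g u‖ ≤ 1 := by
  rcases u with ⟨a, b⟩; rcases a <;> rcases b <;> norm_num [g]

lemma span (u v : Bool × Bool) :
    (if v = u then (1:ℝ) else 0) = ∑ w : Bool × Bool, co u w * phi w v := by
  rcases u with ⟨a, b⟩; rcases v with ⟨c, e⟩
  rcases a <;> rcases b <;> rcases c <;> rcases e <;>
    norm_num [Fintype.sum_prod_type, co, phi, Prod.ext_iff]

/-- Extension of a partial configuration by `(false, false)`. -/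
noncomputable def extFun (J : Finset Λ) (p : ∀ i ∈ J, Bool × Bool) : Λ → Bool × Bool :=
  fun i => if h : i ∈ J then p i h else (false, false)

lemma psi_congr (x x' y : Λ → Bool × Bool) (hx : ∀ i, y i ≠ (false, false) → x i = x' i) :
    Psi23 x y = Psi23 x' y := by
  have h1 : ∀ i, (y i).1 = true → x i = x' i := by
    intro i hi
    refine hx i fun hc => ?_
    rw [hc] at hi; simp at hi
  have h2 : ∀ i, (y i).2 = true → x i = x' i := by
    intro i hi
    refine hx i fun hc => ?_
    rw [hc] at hi; simp at hi
  have hex : (∃ i, (x i).1 = true ∧ (y i).1 = true) ↔ (∃ i, (x' i).1 = true ∧ (y i).1 = true) := by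
    constructor
    · rintro ⟨i, hxi, hyi⟩; exact ⟨i, by rw [← h1 i hyi]; exact hxi, hyi⟩
    · rintro ⟨i, hxi, hyi⟩; exact ⟨i, by rw [h1 i hyi]; exact hxi, hyi⟩
  have hset : {i : Λ | (x i).2 = true ∧ (y i).2 = true}
      = {i : Λ | (x' i).2 = true ∧ (y i).2 = true} := by
    ext i
    constructor
    · rintro ⟨hxi, hyi⟩; exact ⟨by rw [← h2 i hyi]; exact hxi, hyi⟩
    · rintro ⟨hxi, hyi⟩; exact ⟨by rw [h2 i hyi]; exact hxi, hyi⟩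
  simp only [Psi23, hex, hset]

lemma meas_psi (J : Finset Λ) (y : Λ → Bool × Bool) (hy : ∀ i ∉ J, y i = (false, false)) :
    Measurable (fun x : Λ → Bool × Bool => Psi23 x y) := by
  have hcomp : (fun x : Λ → Bool × Bool => Psi23 x y)
      = (fun v : (∀ _ : ↥J, Bool × Bool) => Psi23 (extFun J (fun i h => v ⟨i, h⟩)) y)
        ∘ (J.restrict) := by
    funext x
    refine psi_congr x _ y fun i hi => ?_
    have hiJ : i ∈ J := by
      by_contra hc; exact hi (hy i hc)
    simp [Finset.restrict, extFun, dif_pos hiJ]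
  rw [hcomp]
  exact (measurable_of_countable _).comp (J.measurable_restrict)

lemma integrable_g {μ : Measure (Λ → Bool × Bool)} [IsFiniteMeasure μ]
    (J : Finset Λ) (y : Λ → Bool × Bool) (hy : ∀ i ∉ J, y i = (false, false)) :
    Integrable (fun x => g (Psi23 x y)) μ :=
  ⟨((measurable_of_countable g).comp (meas_psi J y hy)).aestronglyMeasurable,
   HasFiniteIntegral.of_bounded (C := 1) (ae_of_all _ fun x => norm_g_le _)⟩

lemma integral_g_eq {μ μ' : Measure (Λ → Bool × Bool)}
    (J : Finset Λ) (y : Λ → Bool × Bool) (hy : ∀ i ∉ J, y i = (false, false))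
    (hmap : μ.map (fun x => Psi23 x y) = μ'.map (fun x => Psi23 x y)) :
    ∫ x, g (Psi23 x y) ∂μ = ∫ x, g (Psi23 x y) ∂μ' := by
  rw [← integral_map (meas_psi J y hy).aemeasurable
      (measurable_of_countable g).aestronglyMeasurable,
    ← integral_map (meas_psi J y hy).aemeasurable
      (measurable_of_countable g).aestronglyMeasurable, hmap]

lemma cyl_measurable (J : Finset Λ) (η : Λ → Bool × Bool) :
    MeasurableSet {x : Λ → Bool × Bool | ∀ i ∈ J, x i = η i} := by
  have : {x : Λ → Bool × Bool | ∀ i ∈ J, x i = η i}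
      = ⋂ i ∈ (J : Set Λ), (fun x : Λ → Bool × Bool => x i) ⁻¹' {η i} := by
    ext x; simp
  rw [this]
  exact MeasurableSet.biInter J.countable_toSet
    (fun i _ => (measurable_pi_apply i) (measurableSet_singleton _))

lemma cyl_eq (μ μ' : Measure (Λ → Bool × Bool))
    [IsProbabilityMeasure μ] [IsProbabilityMeasure μ']
    (h : ∀ y : Λ → Bool × Bool, {i : Λ | y i ≠ (false, false)}.Finite →
      μ.map (fun x => Psi23 x y) = μ'.map (fun x => Psi23 x y))
    (J : Finset Λ) (η : Λ → Bool × Bool) :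
    μ {x | ∀ i ∈ J, x i = η i} = μ' {x | ∀ i ∈ J, x i = η i} := by
  classical
  set s : Set (Λ → Bool × Bool) := {x | ∀ i ∈ J, x i = η i} with hs_def
  have hs : MeasurableSet s := cyl_measurable J η
  have hext : ∀ p : ∀ i ∈ J, Bool × Bool, ∀ i ∉ J, extFun J p i = (false, false) :=
    fun p i hi => dif_neg hi
  -- the indicator of s is a finite linear combination of the g ∘ Psi23 functions
  have key : ∀ x : Λ → Bool × Bool, s.indicator (1 : (Λ → Bool × Bool) → ℝ) x
      = ∑ p ∈ J.pi (fun _ => (Finset.univ : Finset (Bool × Bool))),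
          (∏ i ∈ J.attach, co (η i.1) (p i.1 i.2)) * g (Psi23 x (extFun J p)) := by
    intro x
    have h0 : s.indicator (1 : (Λ → Bool × Bool) → ℝ) x
        = ∏ i ∈ J, (if x i = η i then (1:ℝ) else 0) := by
      rw [Finset.prod_boole]
      by_cases hx : x ∈ s
      · have hx' : ∀ i ∈ J, x i = η i := hx
        rw [Set.indicator_of_mem hx, if_pos hx']; rfl
      · have hx' : ¬ ∀ i ∈ J, x i = η i := hx
        rw [Set.indicator_of_notMem hx, if_neg hx']
    rw [h0]
    have h1 : ∏ i ∈ J, (if x i = η i then (1:ℝ) else 0)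
        = ∏ i ∈ J, ∑ w ∈ (Finset.univ : Finset (Bool × Bool)), co (η i) w * phi w (x i) :=
      Finset.prod_congr rfl fun i _ => span (η i) (x i)
    rw [h1, Finset.prod_sum]
    refine Finset.sum_congr rfl fun p _ => ?_
    rw [Finset.prod_mul_distrib]
    congr 1
    have h2 : ∀ i : ↥J, phi (p i.1 i.2) (x i.1) = phi (extFun J p i.1) (x i.1) := by
      intro i
      rw [extFun, dif_pos i.2]
    calc ∏ i ∈ J.attach, phi (p i.1 i.2) (x i.1)
        = ∏ i ∈ J.attach, phi (extFun J p i.1) (x i.1) :=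
          Finset.prod_congr rfl fun i _ => h2 i
      _ = ∏ i ∈ J, phi (extFun J p i) (x i) := Finset.prod_attach J (fun i => phi (extFun J p i) (x i))
      _ = g (Psi23 x (extFun J p)) := (g_psi J (extFun J p) (hext p) x).symm
  -- integrate
  have hint : ∀ (ν : Measure (Λ → Bool × Bool)), IsProbabilityMeasure ν →
      ∫ x, s.indicator (1 : (Λ → Bool × Bool) → ℝ) x ∂ν
      = ∑ p ∈ J.pi (fun _ => (Finset.univ : Finset (Bool × Bool))),
          (∏ i ∈ J.attach, co (η i.1) (p i.1 i.2)) * ∫ x, g (Psi23 x (extFun J p)) ∂ν := by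
    intro ν hν
    rw [integral_congr_ae (ae_of_all _ key), integral_finset_sum _
      (fun p _ => (integrable_g J (extFun J p) (hext p)).const_mul _)]
    exact Finset.sum_congr rfl fun p _ => integral_const_mul _ _
  have hIμ := hint μ inferInstance
  have hIμ' := hint μ' inferInstance
  have hsum : ∫ x, s.indicator (1 : (Λ → Bool × Bool) → ℝ) x ∂μ
      = ∫ x, s.indicator (1 : (Λ → Bool × Bool) → ℝ) x ∂μ' := by
    rw [hIμ, hIμ']
    refine Finset.sum_congr rfl fun p _ => ?_
    congr 1
    refine integral_g_eq J (extFun J p) (hext p) (h (extFun J p) ?_)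
    refine Set.Finite.subset J.finite_toSet fun i hi => ?_
    by_contra hc
    exact hi (hext p i hc)
  rw [integral_indicator_one hs, integral_indicator_one hs] at hsum
  exact (ENNReal.toReal_eq_toReal_iff' (measure_ne_top μ s) (measure_ne_top μ' s)).mp hsum

end Psi23Aux

/-- **`Ψ₂₃` is weakly distribution determining.** If two Borel probability measures `μ`, `μ'`
on `𝒰 = U^{ℤ^d}` (product topology, `U = Bool × Bool` discrete) are such that for every
finitely supported `y` the pushforwards of `μ` and `μ'` under `x ↦ Ψ₂₃(x,y)` coincide as
measures on `U`, then `μ = μ'`. -/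
theorem psi23_weakly_distribution_determining
    (d : ℕ) (hd : 1 ≤ d)
    (μ μ' : Measure ((Fin d → ℤ) → Bool × Bool))
    (hμ : IsProbabilityMeasure μ) (hμ' : IsProbabilityMeasure μ')
    (h : ∀ y : (Fin d → ℤ) → Bool × Bool,
      {i : Fin d → ℤ | y i ≠ (false, false)}.Finite →
      μ.map (fun x => Psi23 x y) = μ'.map (fun x => Psi23 x y)) :
    μ = μ' := by
  classical
  refine ext_of_generate_finite (measurableCylinders _)
    generateFrom_measurableCylinders.symm isPiSystem_measurableCylinders ?_ ?_
  · intro t ht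
    obtain ⟨J, S, hS, rfl⟩ := (mem_measurableCylinders t).mp ht
    show μ (J.restrict ⁻¹' S) = μ' (J.restrict ⁻¹' S)
    rw [← Measure.map_apply (J.measurable_restrict) hS,
        ← Measure.map_apply (J.measurable_restrict) hS]
    congr 1
    refine Measure.ext_of_singleton fun v => ?_
    rw [Measure.map_apply (J.measurable_restrict) (measurableSet_singleton v),
        Measure.map_apply (J.measurable_restrict) (measurableSet_singleton v)]
    have hpre : Finset.restrict (π := fun _ => Bool × Bool) J ⁻¹' {v} = {x : (Fin d → ℤ) → Bool × Bool |
        ∀ i ∈ J, x i = Psi23Aux.extFun J (fun i hi => v ⟨i, hi⟩) i} := by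
      ext x
      simp only [Set.mem_preimage, Set.mem_singleton_iff, Set.mem_setOf_eq, Finset.restrict]
      constructor
      · intro hxv i hi
        rw [Psi23Aux.extFun, dif_pos hi]
        exact congrFun hxv ⟨i, hi⟩
      · intro hx
        funext i
        show x i.1 = v i
        rw [hx i.1 i.2, Psi23Aux.extFun, dif_pos i.2]
    rw [hpre]
    exact Psi23Aux.cyl_eq μ μ' h J _
  · simp [measure_univ]
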